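/- For every x** ∈ (ℓ∞)* = (ℓ¹)**, one has x**(G* x**) = −(w***(x**))², where G is the Gossez operator. In particular, x**(G* x**) ≤ 0 for all x**. -/

import Mathlib

noncomputable section
open scoped ENNReal
open Filter

abbrev ell1 := lp (fun _ : ℕ => ℝ) 1
abbrev ellInfty := lp (fun _ : ℕ => ℝ) ∞

/-- The Gossez operator, coordinatewise: (Gx)_m = Σ_{n>m} x_n − Σ_{n<m} x_n. -/
def Gfun (x : ℕ → ℝ) (m : ℕ) : ℝ :=
  (∑' n, if m < n then x n else 0) - ∑ n ∈ Finset.range m, x n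

/-- The all-ones sequence e* ∈ ℓ∞. -/
def eStar : ellInfty :=
  ⟨fun _ => (1 : ℝ), memℓp_infty ⟨1, by rintro r ⟨i, rfl⟩; simp⟩⟩

/-- The m-th standard unit vector e*_m ∈ ℓ∞. -/
def eVec (m : ℕ) : ellInfty := lp.single ∞ m (1 : ℝ)

lemma eVec_apply (m k : ℕ) : eVec m k = if k = m then 1 else 0 := by
  rcases eq_or_ne k m with rfl | h
  · simp [eVec, lp.single_apply_self]
  · simp [eVec, lp.single_apply_ne _ _ _ h, h]

lemma eStar_apply (k : ℕ) : eStar k = 1 := rfl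

lemma sum_smul_eVec_apply (σ : ℕ → ℝ) (n k : ℕ) :
    (∑ m ∈ Finset.range n, σ m • eVec m) k = if k ∈ Finset.range n then σ k else 0 := by
  rw [lp.coeFn_sum, Finset.sum_apply]
  simp only [lp.coeFn_smul, Pi.smul_apply, eVec_apply, smul_eq_mul, mul_ite, mul_one, mul_zero]
  exact Finset.sum_ite_eq _ _ _

lemma sum_eVec_apply (n k : ℕ) :
    (∑ m ∈ Finset.range n, eVec m) k = if k ∈ Finset.range n then 1 else 0 := by
  rw [lp.coeFn_sum, Finset.sum_apply]
  simp only [eVec_apply]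
  exact Finset.sum_ite_eq _ _ _

lemma norm_sum_smul_eVec_le (σ : ℕ → ℝ) (hσ : ∀ m, |σ m| ≤ 1) (n : ℕ) :
    ‖∑ m ∈ Finset.range n, σ m • eVec m‖ ≤ 1 := by
  refine lp.norm_le_of_forall_le zero_le_one fun k => ?_
  rw [Real.norm_eq_abs, sum_smul_eVec_apply]
  split_ifs
  · exact hσ k
  · simp

lemma single1_apply (m k : ℕ) : (lp.single 1 m (1:ℝ) : ell1) k = if k = m then 1 else 0 := by
  rcases eq_or_ne k m with rfl | h
  · simp [lp.single_apply_self]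
  · simp [lp.single_apply_ne _ _ _ h, h]

lemma Gfun_single (m k : ℕ) :
    Gfun (lp.single 1 m (1:ℝ) : ell1) k
      = (if k < m then 1 else 0) - (if m < k then 1 else 0) := by
  unfold Gfun
  have h1 : (∑' n, if k < n then (lp.single 1 m (1:ℝ) : ell1) n else 0)
      = if k < m then 1 else 0 := by
    have hc : ∀ n : ℕ, (if k < n then (lp.single 1 m (1:ℝ) : ell1) n else 0)
        = (if n = m then (if k < m then (1:ℝ) else 0) else 0) := by
      intro n
      rw [single1_apply]
      rcases eq_or_ne n m with rfl | h
      · simp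
      · simp [h]
    rw [tsum_congr hc, tsum_eq_single m (by intro n hn; simp [hn]), if_pos rfl]
  have h2 : (∑ n ∈ Finset.range k, (lp.single 1 m (1:ℝ) : ell1) n)
      = if m < k then 1 else 0 := by
    simp only [single1_apply]
    rw [Finset.sum_ite_eq' (Finset.range k) m (fun _ => (1:ℝ))]
    simp [Finset.mem_range]
  rw [h1, h2]

section main

variable (xss : StrongDual ℝ ellInfty)

/-- a_m = x**(e*_m). -/
def aa (m : ℕ) : ℝ := xss (eVec m)
/-- Partial sums of a. -/
def SS (n : ℕ) : ℝ := ∑ k ∈ Finset.range n, aa xss k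
/-- Full sum of a. -/
def sT : ℝ := ∑' k, aa xss k
/-- Tail sums of a. -/
def TT (m : ℕ) : ℝ := ∑' k, aa xss (k + m)
/-- Tail sums of |a|. -/
def TT' (m : ℕ) : ℝ := ∑' k, |aa xss (k + m)|
/-- Coefficients c_m = a_m - 2 T_m. -/
def cc (m : ℕ) : ℝ := aa xss m - 2 * TT xss m
/-- Approximating elements of ℓ∞ converging to G* x**. -/
def gg (N : ℕ) : ellInfty :=
  (2 * sT xss - xss eStar) • eStar + ∑ m ∈ Finset.range N, cc xss m • eVec m

lemma habs : Summable (fun m => |aa xss m|) := by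
  apply summable_of_sum_range_le (fun n => abs_nonneg _)
  intro n
  set σ : ℕ → ℝ := fun m => if 0 ≤ aa xss m then 1 else -1 with hσdef
  have hσ : ∀ m, |σ m| ≤ 1 := by
    intro m; simp only [hσdef]; split_ifs <;> norm_num
  have h1 : ∑ m ∈ Finset.range n, |aa xss m|
      = xss (∑ m ∈ Finset.range n, σ m • eVec m) := by
    rw [map_sum]
    refine Finset.sum_congr rfl fun m _ => ?_
    rw [map_smul, smul_eq_mul]
    simp only [hσdef]
    split_ifs with h
    · rw [one_mul, abs_of_nonneg h]; rfl
    · rw [abs_of_neg (lt_of_not_ge h)]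
      show -aa xss m = -1 * xss (eVec m)
      unfold aa; ring
  rw [h1]
  calc xss (∑ m ∈ Finset.range n, σ m • eVec m)
      ≤ ‖xss (∑ m ∈ Finset.range n, σ m • eVec m)‖ := le_abs_self _
    _ ≤ ‖xss‖ * ‖∑ m ∈ Finset.range n, σ m • eVec m‖ := xss.le_opNorm _
    _ ≤ ‖xss‖ * 1 :=
        mul_le_mul_of_nonneg_left (norm_sum_smul_eVec_le σ hσ n) (norm_nonneg _)
    _ = ‖xss‖ := mul_one _

lemma hsum : Summable (aa xss) := (habs xss).of_abs

lemma hshift' (m : ℕ) : Summable (fun k => |aa xss (k + m)|) :=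
  (summable_nat_add_iff (f := fun n => |aa xss n|) m).2 (habs xss)

lemma hTS (m : ℕ) : SS xss m + TT xss m = sT xss :=
  Summable.sum_add_tsum_nat_add m (hsum xss)

lemma hT'nonneg (m : ℕ) : 0 ≤ TT' xss m := tsum_nonneg (fun _ => abs_nonneg _)

lemma hTle (m : ℕ) : |TT xss m| ≤ TT' xss m := by
  simpa [Real.norm_eq_abs, TT, TT'] using
    norm_tsum_le_tsum_norm (f := fun k => aa xss (k + m))
      (by simpa [Real.norm_eq_abs] using hshift' xss m)

lemma hT'anti : Antitone (TT' xss) := by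
  refine antitone_nat_of_succ_le fun m => ?_
  have h := Summable.tsum_eq_zero_add (hshift' xss m)
  have h2 : (∑' k, |aa xss ((k + 1) + m)|) = TT' xss (m+1) := by
    apply tsum_congr; intro k
    have hk : (k + 1) + m = k + (m + 1) := by omega
    rw [hk]
  rw [h2] at h
  have h3 := abs_nonneg (aa xss (0 + m))
  unfold TT' at *
  linarith [h.le]

lemma hT't : Tendsto (TT' xss) atTop (nhds 0) := by
  have h1 : Tendsto (fun m => ∑ k ∈ Finset.range m, |aa xss k|) atTop
      (nhds (∑' k, |aa xss k|)) := (habs xss).hasSum.tendsto_sum_nat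
  have h2 : TT' xss = fun m => (∑' k, |aa xss k|) - ∑ k ∈ Finset.range m, |aa xss k| := by
    funext m
    have := Summable.sum_add_tsum_nat_add m (habs xss)
    unfold TT'
    linarith
  rw [h2]
  have h3 := (tendsto_const_nhds (x := ∑' k, |aa xss k|) (f := atTop)).sub h1
  simpa using h3

lemma hTt : Tendsto (TT xss) atTop (nhds 0) :=
  squeeze_zero_norm (fun m => by simpa [Real.norm_eq_abs] using hTle xss m) (hT't xss)

lemma htel (N : ℕ) :
    ∑ m ∈ Finset.range N, cc xss m * aa xss m = TT xss N ^ 2 - sT xss ^ 2 := by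
  induction N with
  | zero =>
      have h0 := hTS xss 0
      have hS0 : SS xss 0 = 0 := by simp [SS]
      have hT0 : TT xss 0 = sT xss := by linarith
      simp [hT0]
  | succ N ih =>
      have e1 := hTS xss N
      have e2 := hTS xss (N+1)
      have e3 : SS xss (N+1) = SS xss N + aa xss N := Finset.sum_range_succ _ _
      have hstep : TT xss (N+1) = TT xss N - aa xss N := by linarith
      rw [Finset.sum_range_succ, ih, hstep]
      unfold cc
      ring

lemma hval (N : ℕ) : xss (gg xss N)
    = (2 * sT xss - xss eStar) * xss eStar + (TT xss N ^ 2 - sT xss ^ 2) := by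
  unfold gg
  rw [map_add, map_smul, map_sum, smul_eq_mul]
  have hterm : ∀ m ∈ Finset.range N, xss (cc xss m • eVec m) = cc xss m * aa xss m := by
    intro m _; rw [map_smul, smul_eq_mul]; rfl
  rw [Finset.sum_congr rfl hterm, htel xss N]

end main

set_option maxHeartbeats 1000000

theorem gossez_adjoint_quadratic
    (G : ell1 →L[ℝ] ellInfty) (hG : ∀ (x : ell1) (m : ℕ), G x m = Gfun x m)
    (xss : StrongDual ℝ ellInfty) (gstar : ellInfty)
    (hgstar : ∀ x : ell1, xss (G x) = ∑' m, x m * gstar m) :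
    xss gstar = -(xss eStar - ∑' m, xss (eVec m)) ^ 2 ∧ xss gstar ≤ 0 := by
  classical
  -- the coordinates of gstar
  have hgs : ∀ m, gstar m = SS xss m + SS xss (m+1) - xss eStar := by
    intro m
    have hx : xss (G (lp.single 1 m (1:ℝ))) = gstar m := by
      rw [hgstar]
      have hc : ∀ n, (lp.single 1 m (1:ℝ) : ell1) n * gstar n
          = if n = m then gstar m else 0 := by
        intro n; rw [single1_apply]
        rcases eq_or_ne n m with rfl | h
        · simp
        · simp [h]
      rw [tsum_congr hc, tsum_eq_single m (fun n hn => by simp [hn]), if_pos rfl]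
    have hGx : G (lp.single 1 m (1:ℝ))
        = (∑ k ∈ Finset.range m, eVec k) + (∑ k ∈ Finset.range (m+1), eVec k) - eStar := by
      apply lp.ext
      funext k
      have hrhs : ((∑ k ∈ Finset.range m, eVec k) + (∑ k ∈ Finset.range (m+1), eVec k)
            - eStar : ellInfty) k
          = (if k < m then 1 else 0) + (if k < m+1 then 1 else 0) - 1 := by
        rw [lp.coeFn_sub, Pi.sub_apply, lp.coeFn_add, Pi.add_apply]
        rw [sum_eVec_apply, sum_eVec_apply, eStar_apply]
        simp [Finset.mem_range]
      show (G (lp.single 1 m (1:ℝ))) k = _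
      rw [hG, Gfun_single, hrhs]
      split_ifs <;> first | omega | norm_num
    rw [hGx] at hx
    rw [map_sub, map_add, map_sum, map_sum] at hx
    exact hx.symm
  -- norm estimate
  have hcoord : ∀ N k, (gstar - gg xss N) k
      = if k < N then 0 else -(TT xss k + TT xss (k+1)) := by
    intro N k
    rw [lp.coeFn_sub, Pi.sub_apply, hgs k]
    have hgNk : (gg xss N) k
        = (2 * sT xss - xss eStar) + (if k ∈ Finset.range N then cc xss k else 0) := by
      unfold gg
      rw [lp.coeFn_add, Pi.add_apply, lp.coeFn_smul, Pi.smul_apply, eStar_apply,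
        smul_eq_mul, mul_one, sum_smul_eVec_apply]
    rw [hgNk]
    have e1 := hTS xss k
    have e2 := hTS xss (k+1)
    have e3 : SS xss (k+1) = SS xss k + aa xss k := Finset.sum_range_succ _ _
    simp only [Finset.mem_range]
    split_ifs with h
    · unfold cc; linarith
    · linarith
  have hnorm : ∀ N, ‖gstar - gg xss N‖ ≤ 2 * TT' xss N := by
    intro N
    refine lp.norm_le_of_forall_le (by linarith [hT'nonneg xss N]) fun k => ?_
    rw [Real.norm_eq_abs, hcoord]
    split_ifs with h
    · rw [abs_zero]; linarith [hT'nonneg xss N]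
    · have h1 : |TT xss k| ≤ TT' xss N :=
        (hTle xss k).trans (hT'anti xss (by omega))
      have h2 : |TT xss (k+1)| ≤ TT' xss N :=
        (hTle xss (k+1)).trans (hT'anti xss (by omega))
      calc |(-(TT xss k + TT xss (k+1)))| = |TT xss k + TT xss (k+1)| := abs_neg _
        _ ≤ |TT xss k| + |TT xss (k+1)| := abs_add_le _ _
        _ ≤ 2 * TT' xss N := by linarith
  -- convergence gg N → gstar
  have h2T : Tendsto (fun N => 2 * TT' xss N) atTop (nhds 0) := by
    simpa using (tendsto_const_nhds (x := (2:ℝ)) (f := atTop)).mul (hT't xss)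
  have h0 : Tendsto (fun N => ‖gg xss N - gstar‖) atTop (nhds 0) :=
    squeeze_zero (fun N => norm_nonneg _)
      (fun N => by rw [norm_sub_rev]; exact hnorm N) h2T
  have hglim : Tendsto (gg xss) atTop (nhds gstar) :=
    tendsto_iff_norm_sub_tendsto_zero.mpr h0
  have hxg : Tendsto (fun N => xss (gg xss N)) atTop (nhds (xss gstar)) :=
    (xss.continuous.tendsto gstar).comp hglim
  simp only [hval] at hxg
  have hlim2 : Tendsto (fun N => (2 * sT xss - xss eStar) * xss eStar
      + (TT xss N ^ 2 - sT xss ^ 2)) atTop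
      (nhds ((2 * sT xss - xss eStar) * xss eStar + ((0:ℝ)^2 - sT xss ^ 2))) :=
    tendsto_const_nhds.add (((hTt xss).pow 2).sub tendsto_const_nhds)
  have hkey : xss gstar = (2 * sT xss - xss eStar) * xss eStar + ((0:ℝ)^2 - sT xss ^ 2) :=
    tendsto_nhds_unique hxg hlim2
  have hs : (∑' m, xss (eVec m)) = sT xss := rfl
  constructor
  · rw [hs, hkey]; ring
  · rw [hkey]; nlinarith [sq_nonneg (xss eStar - sT xss)]
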